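/- Let R be a ring and e a central idempotent of R. Then R is almost Armendariz if and only if both corner rings eR and (1−e)R are almost Armendariz. -/

import Mathlib

/-- An element `a` of a ring `R` is *strongly nilpotent* if every sequence
`a₀ = a`, `aₙ₊₁ ∈ aₙ R aₙ` is eventually zero. -/
def IsStronglyNilpotent {R : Type*} [Ring R] (a : R) : Prop :=
  ∀ s : ℕ → R, s 0 = a → (∀ n : ℕ, ∃ r : R, s (n + 1) = s n * r * s n) → ∃ n : ℕ, s n = 0

/-- The prime radical `P(R)` of a ring `R`: the intersection of all prime two-sided
ideals of `R`, equivalently the set of strongly nilpotent elements of `R`. -/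
def primeRadical (R : Type*) [Ring R] : Set R :=
  {a : R | IsStronglyNilpotent a}

/-- A ring `R` is *almost Armendariz* if whenever `f, g ∈ R[x]` satisfy `f g = 0`, every
product of a coefficient of `f` with a coefficient of `g` lies in the prime radical `P(R)`. -/
def IsAlmostArmendariz (R : Type*) [Ring R] : Prop :=
  ∀ f g : Polynomial R, f * g = 0 → ∀ i j : ℕ, f.coeff i * g.coeff j ∈ primeRadical R

/-- The corner `eR = {e * r : r ∈ R}` as a non-unital subring of `R`. -/
def cornerNonUnitalSubring {R : Type*} [Ring R] (e : R) : NonUnitalSubring R where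
  carrier := {x : R | ∃ r : R, x = e * r}
  zero_mem' := ⟨0, (mul_zero e).symm⟩
  add_mem' := by
    rintro x y ⟨r, hr⟩ ⟨s, hs⟩
    exact ⟨r + s, by rw [hr, hs, mul_add]⟩
  neg_mem' := by
    rintro x ⟨r, hr⟩
    exact ⟨-r, by rw [hr, mul_neg]⟩
  mul_mem' := by
    rintro x y ⟨r, hr⟩ -
    exact ⟨r * y, by rw [hr, mul_assoc]⟩

/-- For a central idempotent `e`, the corner `eR` is a ring with identity `e`. -/
def cornerRing {R : Type*} [Ring R] (e : R) (he : e * e = e) (hc : ∀ r : R, e * r = r * e) :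
    Ring (cornerNonUnitalSubring e) :=
  { (inferInstance : NonUnitalRing (cornerNonUnitalSubring e)) with
    one := ⟨e, 1, (mul_one e).symm⟩
    one_mul := fun x => Subtype.ext (show e * (x : R) = x by
      obtain ⟨r, hr⟩ : ∃ r : R, (x : R) = e * r := x.2
      rw [hr, ← mul_assoc, he])
    mul_one := fun x => Subtype.ext (show (x : R) * e = x by
      obtain ⟨r, hr⟩ : ∃ r : R, (x : R) = e * r := x.2
      rw [← hc, hr, ← mul_assoc, he]) }


section Aux

variable {R : Type*} [Ring R]

/-- The ring hom `R → eR`, `r ↦ e * r`, for a central idempotent `e`. -/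
def cornerHom (e : R) (he : e * e = e) (hc : ∀ r : R, e * r = r * e) :
    letI : Ring (cornerNonUnitalSubring e) := cornerRing e he hc
    R →+* cornerNonUnitalSubring e :=
  letI : Ring (cornerNonUnitalSubring e) := cornerRing e he hc
  { toFun := fun r => ⟨e * r, r, rfl⟩
    map_one' := Subtype.ext (mul_one e)
    map_mul' := fun r s => Subtype.ext (show e * (r * s) = (e * r) * (e * s) from by
      calc e * (r * s) = (e * e) * (r * s) := by rw [he]
        _ = e * (e * (r * s)) := by rw [mul_assoc]
        _ = e * ((e * r) * s) := by rw [mul_assoc e r s]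
        _ = e * ((r * e) * s) := by rw [hc r]
        _ = e * (r * (e * s)) := by rw [mul_assoc r e s]
        _ = (e * r) * (e * s) := by rw [mul_assoc])
    map_zero' := Subtype.ext (mul_zero e)
    map_add' := fun r s => Subtype.ext (mul_add e r s) }

/-- If `R` is almost Armendariz, so is the corner `eR`. -/
theorem corner_isAlmostArmendariz (e : R) (he : e * e = e) (hc : ∀ r : R, e * r = r * e)
    (hR : IsAlmostArmendariz R) :
    letI : Ring (cornerNonUnitalSubring e) := cornerRing e he hc
    IsAlmostArmendariz (cornerNonUnitalSubring e) := by
  letI : Ring (cornerNonUnitalSubring e) := cornerRing e he hc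
  intro f g hfg i j
  -- lift polynomials over the corner to `R[x]`
  have hzero : (((0 : cornerNonUnitalSubring e)) : R) = 0 := rfl
  have hadd : ∀ x y : cornerNonUnitalSubring e, ((x + y : cornerNonUnitalSubring e) : R)
      = (x : R) + (y : R) := fun _ _ => rfl
  have hmul : ∀ x y : cornerNonUnitalSubring e, ((x * y : cornerNonUnitalSubring e) : R)
      = (x : R) * (y : R) := fun _ _ => rfl
  have coesum : ∀ (s : Finset (ℕ × ℕ)) (F : ℕ × ℕ → cornerNonUnitalSubring e),
      ((∑ x ∈ s, F x : cornerNonUnitalSubring e) : R) = ∑ x ∈ s, ((F x : R)) := by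
    intro s F
    induction s using Finset.cons_induction with
    | empty => rw [Finset.sum_empty, Finset.sum_empty]; exact hzero
    | cons a s ha ih => rw [Finset.sum_cons, Finset.sum_cons, hadd, ih]
  set lift : Polynomial (cornerNonUnitalSubring e) → Polynomial R :=
    fun p => p.sum fun n a => Polynomial.monomial n ((a : R)) with hliftdef
  have hco : ∀ (p : Polynomial (cornerNonUnitalSubring e)) (k : ℕ),
      (lift p).coeff k = ((p.coeff k : cornerNonUnitalSubring e) : R) := by
    intro p k
    rw [hliftdef]
    simp only [Polynomial.sum_def, Polynomial.finset_sum_coeff, Polynomial.coeff_monomial]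
    rw [Finset.sum_ite_eq' p.support k]
    split_ifs with h
    · rfl
    · rw [Polynomial.notMem_support_iff.mp h]; rfl
  have key : lift f * lift g = 0 := by
    ext k
    rw [Polynomial.coeff_mul, Polynomial.coeff_zero]
    have h1 : ∀ x ∈ Finset.HasAntidiagonal.antidiagonal k, (lift f).coeff x.1 * (lift g).coeff x.2
        = ((f.coeff x.1 * g.coeff x.2 : cornerNonUnitalSubring e) : R) := by
      intro x _
      rw [hco, hco, hmul]
    rw [Finset.sum_congr rfl h1, ← coesum]
    rw [← Polynomial.coeff_mul, hfg]
    exact hzero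
  have hmem := hR (lift f) (lift g) key i j
  rw [hco, hco, ← hmul] at hmem
  -- transfer strong nilpotence from `R` down to the corner
  intro s hs0 hstep
  obtain ⟨n, hn⟩ := hmem (fun n => ((s n : R)))
    (show ((s 0 : R)) = _ by rw [hs0]) (by
    intro n
    obtain ⟨r, hr⟩ := hstep n
    exact ⟨(r : R), show ((s (n+1) : R)) = (s n : R) * (r : R) * (s n : R) by
      rw [hr, hmul, hmul]⟩)
  exact ⟨n, Subtype.ext hn⟩

/-- If `⟨e*y⟩` is strongly nilpotent in the corner, then along any "strongly nilpotent test
sequence" for `y` in `R`, eventually `e * s n = 0`. -/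
theorem corner_eventually (e : R) (he : e * e = e) (hc : ∀ r : R, e * r = r * e) (y : R)
    (h : letI : Ring (cornerNonUnitalSubring e) := cornerRing e he hc
      IsStronglyNilpotent (⟨e * y, y, rfl⟩ : cornerNonUnitalSubring e))
    (s : ℕ → R) (hs0 : s 0 = y) (hstep : ∀ n : ℕ, ∃ r : R, s (n + 1) = s n * r * s n) :
    ∃ N : ℕ, ∀ n ≥ N, e * s n = 0 := by
  letI : Ring (cornerNonUnitalSubring e) := cornerRing e he hc
  have hmul : ∀ x z : cornerNonUnitalSubring e, ((x * z : cornerNonUnitalSubring e) : R)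
      = (x : R) * (z : R) := fun _ _ => rfl
  set t : ℕ → cornerNonUnitalSubring e := fun n => ⟨e * s n, s n, rfl⟩ with ht
  obtain ⟨N, hN⟩ := h t (show t 0 = _ from Subtype.ext (show e * s 0 = e * y by rw [hs0])) (by
    intro n
    obtain ⟨r, hr⟩ := hstep n
    refine ⟨⟨e * r, r, rfl⟩, Subtype.ext ?_⟩
    rw [hmul, hmul]
    show e * s (n + 1) = (e * s n) * (e * r) * (e * s n)
    have hdist : ∀ x z : R, e * (x * z) = (e * x) * (e * z) := by
      intro x z
      calc e * (x * z) = (e * e) * (x * z) := by rw [he]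
        _ = e * (e * (x * z)) := by rw [mul_assoc]
        _ = e * ((e * x) * z) := by rw [← mul_assoc e x z]
        _ = e * ((x * e) * z) := by rw [hc x]
        _ = e * (x * (e * z)) := by rw [mul_assoc x e z]
        _ = (e * x) * (e * z) := by rw [← mul_assoc]
    rw [hr, hdist (s n * r) (s n), hdist (s n) r])
  have heN : e * s N = 0 := congrArg Subtype.val hN
  refine ⟨N, ?_⟩
  intro n hn
  induction n with
  | zero => exact le_antisymm hn (Nat.zero_le N) ▸ heN
  | succ m ih =>
    rcases Nat.lt_or_ge N (m + 1) with hlt | hge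
    · have hm : N ≤ m := Nat.lt_succ_iff.mp hlt
      obtain ⟨r, hr⟩ := hstep m
      rw [hr, ← mul_assoc, ← mul_assoc, ih hm, zero_mul, zero_mul]
    · have : N = m + 1 := le_antisymm hn hge
      exact this ▸ heN

theorem isAlmostArmendariz_of_corners (e : R) (he : e * e = e) (hc : ∀ r : R, e * r = r * e)
    (he2 : (1 - e) * (1 - e) = 1 - e) (hc2 : ∀ r : R, (1 - e) * r = r * (1 - e))
    (h1 : letI : Ring (cornerNonUnitalSubring e) := cornerRing e he hc
      IsAlmostArmendariz (cornerNonUnitalSubring e))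
    (h2 : letI : Ring (cornerNonUnitalSubring (1 - e)) := cornerRing (1 - e) he2 hc2
      IsAlmostArmendariz (cornerNonUnitalSubring (1 - e))) :
    IsAlmostArmendariz R := by
  letI : Ring (cornerNonUnitalSubring e) := cornerRing e he hc
  letI : Ring (cornerNonUnitalSubring (1 - e)) := cornerRing (1 - e) he2 hc2
  intro f g hfg i j
  set y : R := f.coeff i * g.coeff j with hy
  -- map into the corner `eR`
  have key1 : letI : Ring (cornerNonUnitalSubring e) := cornerRing e he hc
      IsStronglyNilpotent (⟨e * y, y, rfl⟩ : cornerNonUnitalSubring e) := by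
    have hmap : (f.map (cornerHom e he hc)) * (g.map (cornerHom e he hc)) = 0 := by
      rw [← Polynomial.map_mul, hfg, Polynomial.map_zero]
    have := h1 _ _ hmap i j
    rw [Polynomial.coeff_map, Polynomial.coeff_map, ← map_mul] at this
    exact this
  have key2 : letI : Ring (cornerNonUnitalSubring (1 - e)) := cornerRing (1 - e) he2 hc2
      IsStronglyNilpotent (⟨(1 - e) * y, y, rfl⟩ : cornerNonUnitalSubring (1 - e)) := by
    have hmap : (f.map (cornerHom (1 - e) he2 hc2)) * (g.map (cornerHom (1 - e) he2 hc2)) = 0 := by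
      rw [← Polynomial.map_mul, hfg, Polynomial.map_zero]
    have := h2 _ _ hmap i j
    rw [Polynomial.coeff_map, Polynomial.coeff_map, ← map_mul] at this
    exact this
  intro s hs0 hstep
  obtain ⟨N1, hN1⟩ := corner_eventually e he hc y key1 s hs0 hstep
  obtain ⟨N2, hN2⟩ := corner_eventually (1 - e) he2 hc2 y key2 s hs0 hstep
  refine ⟨max N1 N2, ?_⟩
  have h1' := hN1 (max N1 N2) (le_max_left _ _)
  have h2' := hN2 (max N1 N2) (le_max_right _ _)
  have : (1 : R) * s (max N1 N2) = 0 := by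
    calc (1 : R) * s (max N1 N2) = (e + (1 - e)) * s (max N1 N2) := by
          have h3 : e + (1 - e) = 1 := by abel
          rw [h3]
      _ = e * s (max N1 N2) + (1 - e) * s (max N1 N2) := by rw [add_mul]
      _ = 0 := by rw [h1', h2', add_zero]
  rwa [one_mul] at this

end Aux

/-- Let `e` be a central idempotent of `R`.  Then `R` is almost Armendariz if and only if both
corner rings `eR` and `(1 - e)R` are almost Armendariz. -/
theorem almostArmendariz_iff_corners {R : Type*} [Ring R] (e : R)
    (he : e * e = e) (hc : ∀ r : R, e * r = r * e) :
    letI : Ring (cornerNonUnitalSubring e) := cornerRing e he hc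
    letI : Ring (cornerNonUnitalSubring (1 - e)) :=
      cornerRing (1 - e)
        (by
          have h1 : (1 - e) * e = 0 := by rw [sub_mul, one_mul, he, sub_self]
          rw [mul_sub, mul_one, h1, sub_zero])
        (fun r => by rw [sub_mul, one_mul, mul_sub, mul_one, hc r])
    (IsAlmostArmendariz R ↔
      (IsAlmostArmendariz (cornerNonUnitalSubring e) ∧
        IsAlmostArmendariz (cornerNonUnitalSubring (1 - e)))) := by
  have he2 : (1 - e) * (1 - e) = 1 - e := by
    have h1 : (1 - e) * e = 0 := by rw [sub_mul, one_mul, he, sub_self]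
    rw [mul_sub, mul_one, h1, sub_zero]
  have hc2 : ∀ r : R, (1 - e) * r = r * (1 - e) := fun r => by
    rw [sub_mul, one_mul, mul_sub, mul_one, hc r]
  constructor
  · intro hR
    exact ⟨corner_isAlmostArmendariz e he hc hR,
      corner_isAlmostArmendariz (1 - e) he2 hc2 hR⟩
  · rintro ⟨h1, h2⟩
    exact isAlmostArmendariz_of_corners e he hc he2 hc2 h1 h2
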